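/- For every μ ∈ (0, 1] there exist w₁ > 0 and w₂ > 0 such that, setting W := diag(w₁, w₂) and B⁽ᵐ⁾ := W⁻¹·A⁽ᵐ⁾·W for m ∈ {1, 0, −1}, the normalization condition B⁽¹⁾·(B⁽¹⁾)ᵀ + B⁽⁰⁾·(B⁽⁰⁾)ᵀ + B⁽⁻¹⁾·(B⁽⁻¹⁾)ᵀ = λ₊(μ)·I₂ holds, where I₂ is the 2×2 identity matrix. (This is the injectivity normalization, condition (ii) of the Fannes–Nachtergaele–Werner theory, for the matrix product representation of the S=1 asymmetric VBS state.) -/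

import Mathlib

open Matrix

/-- The matrix `A⁽¹⁾` of the S=1 asymmetric VBS state. -/
noncomputable def A1 (μ : ℝ) : Matrix (Fin 2) (Fin 2) ℝ := !![0, 0; -Real.sqrt μ, 0]

/-- The matrix `A⁽⁰⁾` of the S=1 asymmetric VBS state. -/
noncomputable def A0 (μ : ℝ) : Matrix (Fin 2) (Fin 2) ℝ :=
  (1 / Real.sqrt 2) • !![1, 0; 0, -μ]

/-- The matrix `A⁽⁻¹⁾` of the S=1 asymmetric VBS state. -/
noncomputable def Am1 (μ : ℝ) : Matrix (Fin 2) (Fin 2) ℝ := !![0, Real.sqrt μ; 0, 0]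

/-- The eigenvalue `λ₊(μ)`. -/
noncomputable def lamP (μ : ℝ) : ℝ := (μ ^ 2 + 1 + Real.sqrt (μ ^ 4 + 14 * μ ^ 2 + 1)) / 4

/-- For every `μ ∈ (0,1]` there exist `w₁, w₂ > 0` such that, with `W = diag(w₁, w₂)`
and `B⁽ᵐ⁾ = W⁻¹ A⁽ᵐ⁾ W`, the injectivity normalization
`Σ_m B⁽ᵐ⁾ (B⁽ᵐ⁾)ᵀ = λ₊(μ)·I₂` of the Fannes–Nachtergaele–Werner theory holds. -/
theorem fnw_normalization_S1 (μ : ℝ) (hμ : 0 < μ) (hμ' : μ ≤ 1) :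
    ∃ w₁ w₂ : ℝ, 0 < w₁ ∧ 0 < w₂ ∧
      (!![w₁, 0; 0, w₂]⁻¹ * A1 μ * !![w₁, 0; 0, w₂]) *
          (!![w₁, 0; 0, w₂]⁻¹ * A1 μ * !![w₁, 0; 0, w₂])ᵀ +
        (!![w₁, 0; 0, w₂]⁻¹ * A0 μ * !![w₁, 0; 0, w₂]) *
          (!![w₁, 0; 0, w₂]⁻¹ * A0 μ * !![w₁, 0; 0, w₂])ᵀ +
        (!![w₁, 0; 0, w₂]⁻¹ * Am1 μ * !![w₁, 0; 0, w₂]) *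
          (!![w₁, 0; 0, w₂]⁻¹ * Am1 μ * !![w₁, 0; 0, w₂])ᵀ =
      lamP μ • (1 : Matrix (Fin 2) (Fin 2) ℝ) := by
  set s : ℝ := Real.sqrt (μ ^ 4 + 14 * μ ^ 2 + 1) with hs_def
  have hspos : (0:ℝ) < μ ^ 4 + 14 * μ ^ 2 + 1 := by positivity
  have hs2 : s ^ 2 = μ ^ 4 + 14 * μ ^ 2 + 1 := Real.sq_sqrt hspos.le
  have hs1 : 1 < s := by
    have : Real.sqrt 1 < s := by
      apply Real.sqrt_lt_sqrt (by norm_num)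
      nlinarith
    simpa using this
  set lam : ℝ := lamP μ with hlam_def
  have hlam : lam = (μ ^ 2 + 1 + s) / 4 := rfl
  have hhalf : 1 / 2 < lam := by rw [hlam]; nlinarith
  -- quadratic identity: (lam - 1/2)(lam - μ²/2) = μ²
  have hquad : (lam - 1 / 2) * (lam - μ ^ 2 / 2) = μ ^ 2 := by
    rw [hlam]; nlinarith [hs2]
  set t : ℝ := (lam - 1 / 2) / μ with ht_def
  have ht : 0 < t := div_pos (by linarith) hμ
  have hμt : μ * t = lam - 1 / 2 := by rw [ht_def]; field_simp
  have hμdivt : μ / t = lam - μ ^ 2 / 2 := by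
    rw [ht_def]
    rw [div_div_eq_mul_div, div_eq_iff (by linarith : lam - 1/2 ≠ 0)]
    nlinarith [hquad]
  refine ⟨1, Real.sqrt t, one_pos, Real.sqrt_pos.mpr ht, ?_⟩
  have hrt : Real.sqrt t ^ 2 = t := Real.sq_sqrt ht.le
  have hrtne : Real.sqrt t ≠ 0 := ne_of_gt (Real.sqrt_pos.mpr ht)
  have hrμ : Real.sqrt μ ^ 2 = μ := Real.sq_sqrt hμ.le
  have h2 : Real.sqrt 2 ^ 2 = 2 := Real.sq_sqrt (by norm_num)
  have h2ne : Real.sqrt 2 ≠ 0 := by positivity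
  have hinv : (!![(1:ℝ), 0; 0, Real.sqrt t])⁻¹ = !![(1:ℝ), 0; 0, (Real.sqrt t)⁻¹] := by
    apply inv_eq_right_inv
    ext i j
    fin_cases i <;> fin_cases j <;>
      simp [Matrix.mul_apply, Fin.sum_univ_succ, Matrix.one_apply, hrtne]
  rw [hinv]
  ext i j
  fin_cases i <;> fin_cases j <;>
    simp [A1, A0, Am1, Matrix.mul_apply, Fin.sum_univ_succ, Matrix.transpose_apply,
      Matrix.one_apply, Matrix.smul_apply, Matrix.vecHead, Matrix.vecTail, Function.comp,
        Matrix.vecMul, dotProduct]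
  · -- (0,0)
    have e1 : (Real.sqrt 2)⁻¹ * (Real.sqrt 2)⁻¹ = 1 / 2 := by
      rw [← mul_inv, Real.mul_self_sqrt (by norm_num : (0:ℝ) ≤ 2)]; norm_num
    have e2 : Real.sqrt μ * Real.sqrt t * (Real.sqrt μ * Real.sqrt t) = μ * t := by
      nlinarith [hrμ, hrt]
    rw [e1, e2, hμt]; ring
  · -- (1,1)
    have e1 : (Real.sqrt 2)⁻¹ * (Real.sqrt 2)⁻¹ = 1 / 2 := by
      rw [← mul_inv, Real.mul_self_sqrt (by norm_num : (0:ℝ) ≤ 2)]; norm_num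
    have e3 : (Real.sqrt t)⁻¹ * Real.sqrt μ * ((Real.sqrt t)⁻¹ * Real.sqrt μ) = μ / t := by
      have key : (Real.sqrt t)⁻¹ * Real.sqrt μ * ((Real.sqrt t)⁻¹ * Real.sqrt μ) =
          Real.sqrt μ ^ 2 / Real.sqrt t ^ 2 := by
        field_simp
      rw [key, hrμ, hrt]
    have e4 : (Real.sqrt t)⁻¹ * ((Real.sqrt 2)⁻¹ * μ) * Real.sqrt t *
        ((Real.sqrt t)⁻¹ * ((Real.sqrt 2)⁻¹ * μ) * Real.sqrt t) = μ ^ 2 / 2 := by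
      have h : (Real.sqrt t)⁻¹ * ((Real.sqrt 2)⁻¹ * μ) * Real.sqrt t *
          ((Real.sqrt t)⁻¹ * ((Real.sqrt 2)⁻¹ * μ) * Real.sqrt t) =
          ((Real.sqrt 2)⁻¹ * (Real.sqrt 2)⁻¹) * (μ * μ) *
          ((Real.sqrt t)⁻¹ * Real.sqrt t) * ((Real.sqrt t)⁻¹ * Real.sqrt t) := by ring
      rw [h, inv_mul_cancel₀ hrtne, e1]; ring
    rw [e3, e4, hμdivt]; ring
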